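/- For integers m,n ≥ 2 and 0 < r < (m-1)(n-1), let I_r = {(a,b,h) ∈ ℤ³ : 0 ≤ a ≤ m-1, 0 ≤ b ≤ n-1, h ≥ 0, r = (a+1)(b+1)-1-h} and δ_r(m,n) = min{a·n + b·m - h : (a,b,h) ∈ I_r}. Let I'_r ⊆ ℤ³ be the set of triples (a,b,h) with 0 ≤ a ≤ m-2, 0 ≤ b ≤ n-2, 0 ≤ h ≤ min(a,b), and r = (a+1)(b+1)-1-h. Then δ_r(m,n) = min{a·n + b·m - h : (a,b,h) ∈ I'_r}. -/
import Mathlib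


/-- `δ_r(m,n)`: the minimum of `a*n + b*m - h` over the set
`I_r = {(a,b,h) : 0 ≤ a ≤ m-1, 0 ≤ b ≤ n-1, h ≥ 0, r = (a+1)(b+1)-1-h}`. -/
noncomputable def delta (m n r : ℤ) : ℤ :=
  sInf {d : ℤ | ∃ a b h : ℤ, 0 ≤ a ∧ a ≤ m - 1 ∧ 0 ≤ b ∧ b ≤ n - 1 ∧ 0 ≤ h ∧
    r = (a + 1) * (b + 1) - 1 - h ∧ d = a * n + b * m - h}


/-- Key descent lemma: any pair `(a,b)` with `0 ≤ a ≤ m-2`, `0 ≤ b ≤ n-2` and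
`(a+1)(b+1) ≥ r+1` can be reduced to a triple in the restricted set with a
smaller or equal value. -/
private lemma key_descent (m n r : ℤ) (hm : 2 ≤ m) (hn : 2 ≤ n) (hr0 : 0 < r) :
    ∀ N : ℕ, ∀ a b : ℤ, a.toNat + b.toNat ≤ N → 0 ≤ a → a ≤ m - 2 → 0 ≤ b → b ≤ n - 2 →
    r + 1 ≤ (a + 1) * (b + 1) →
    ∃ a' b' h' : ℤ, 0 ≤ a' ∧ a' ≤ m - 2 ∧ 0 ≤ b' ∧ b' ≤ n - 2 ∧ 0 ≤ h' ∧ h' ≤ min a' b' ∧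
      r = (a' + 1) * (b' + 1) - 1 - h' ∧
      a' * n + b' * m - h' ≤ a * n + b * m - ((a + 1) * (b + 1) - 1 - r) := by
  intro N
  induction N with
  | zero =>
    intro a b hN ha0 _ hb0 _ hprod
    have ha : a = 0 := by omega
    have hb : b = 0 := by omega
    subst ha; subst hb
    exfalso; nlinarith
  | succ N ih =>
    intro a b hN ha0 ha1 hb0 hb1 hprod
    by_cases hA : 1 ≤ b ∧ r + 1 ≤ (a + 1) * b
    · obtain ⟨hA1, hA2⟩ := hA
      obtain ⟨a', b', h', p1, p2, p3, p4, p5, p6, p7, p8⟩ :=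
        ih a (b - 1) (by omega) ha0 ha1 (by omega) (by omega)
          (by nlinarith [hA2])
      refine ⟨a', b', h', p1, p2, p3, p4, p5, p6, p7, ?_⟩
      have e : (a + 1) * (b + 1) = (a + 1) * ((b - 1) + 1) + (a + 1) := by ring
      have e2 : (a + 1) * ((b - 1) + 1) = (a + 1) * b := by ring
      nlinarith [p8]
    · by_cases hB : 1 ≤ a ∧ r + 1 ≤ a * (b + 1)
      · obtain ⟨hB1, hB2⟩ := hB
        obtain ⟨a', b', h', p1, p2, p3, p4, p5, p6, p7, p8⟩ :=
          ih (a - 1) b (by omega) (by omega) (by omega) hb0 hb1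
            (by nlinarith [hB2])
        refine ⟨a', b', h', p1, p2, p3, p4, p5, p6, p7, ?_⟩
        nlinarith [p8]
      · push_neg at hA hB
        have hab : (a + 1) * b ≤ r := by
          rcases lt_or_ge b 1 with h | h
          · have : b = 0 := by omega
            subst this; simpa using hr0.le
          · linarith [hA h]
        have hba : a * (b + 1) ≤ r := by
          rcases lt_or_ge a 1 with h | h
          · have : a = 0 := by omega
            subst this; simpa using hr0.le
          · linarith [hB h]
        refine ⟨a, b, (a + 1) * (b + 1) - 1 - r, ha0, ha1, hb0, hb1, by linarith, ?_,
          by ring, le_refl _⟩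
        refine le_min (by nlinarith) (by nlinarith)

/-- Every element of the big set dominates some element of the restricted set. -/
private lemma reduce (m n r : ℤ) (hm : 2 ≤ m) (hn : 2 ≤ n) (hr0 : 0 < r)
    (hr1 : r < (m - 1) * (n - 1)) :
    ∀ d ∈ {d : ℤ | ∃ a b h : ℤ, 0 ≤ a ∧ a ≤ m - 1 ∧ 0 ≤ b ∧ b ≤ n - 1 ∧ 0 ≤ h ∧
      r = (a + 1) * (b + 1) - 1 - h ∧ d = a * n + b * m - h},
    ∃ d' ∈ {d : ℤ | ∃ a b h : ℤ, 0 ≤ a ∧ a ≤ m - 2 ∧ 0 ≤ b ∧ b ≤ n - 2 ∧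
      0 ≤ h ∧ h ≤ min a b ∧ r = (a + 1) * (b + 1) - 1 - h ∧ d = a * n + b * m - h},
    d' ≤ d := by
  rintro d ⟨a, b, h, ha0, ha1, hb0, hb1, hh0, hr, hd⟩
  have hprod : r + 1 ≤ (a + 1) * (b + 1) := by linarith
  have hdval : d = a * n + b * m - ((a + 1) * (b + 1) - 1 - r) := by
    rw [hd]; linarith
  by_cases hc : a ≤ m - 2
  · by_cases hc2 : b ≤ n - 2
    · obtain ⟨a', b', h', p1, p2, p3, p4, p5, p6, p7, p8⟩ :=
        key_descent m n r hm hn hr0 (a.toNat + b.toNat) a b le_rfl ha0 hc hb0 hc2 hprod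
      exact ⟨a' * n + b' * m - h', ⟨a', b', h', p1, p2, p3, p4, p5, p6, p7, rfl⟩,
        by linarith [p8]⟩
    · -- b = n - 1
      have hb : b = n - 1 := by omega
      set a₀ := r / (n - 1) with ha₀def
      have hn1 : (0 : ℤ) < n - 1 := by linarith
      have hmod1 : 0 ≤ r % (n - 1) := Int.emod_nonneg r (by linarith)
      have hmod2 : r % (n - 1) < n - 1 := Int.emod_lt_of_pos r hn1
      have hdm : (n - 1) * a₀ + r % (n - 1) = r := Int.mul_ediv_add_emod r (n - 1)
      have h1 : (n - 1) * a₀ ≤ r := by linarith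
      have h2 : r < (n - 1) * (a₀ + 1) := by nlinarith
      have ha₀0 : 0 ≤ a₀ := Int.ediv_nonneg hr0.le (by linarith)
      have ha₀1 : a₀ ≤ m - 2 := by nlinarith
      obtain ⟨a', b', h', p1, p2, p3, p4, p5, p6, p7, p8⟩ :=
        key_descent m n r hm hn hr0 (a₀.toNat + (n - 2).toNat) a₀ (n - 2) le_rfl
          ha₀0 ha₀1 (by linarith) le_rfl (by nlinarith)
      refine ⟨a' * n + b' * m - h', ⟨a', b', h', p1, p2, p3, p4, p5, p6, p7, rfl⟩, ?_⟩
      have e1 : (a₀ + 1) * ((n - 2) + 1) = (n - 1) * a₀ + n - 1 := by ring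
      have e2 : (a + 1) * (b + 1) = (a + 1) * n := by rw [hb]; ring
      have hdiff : a * n + b * m - ((a + 1) * (b + 1) - 1 - r) -
          (a₀ * n + (n - 2) * m - ((a₀ + 1) * ((n - 2) + 1) - 1 - r)) = m - 1 - a₀ := by
        rw [hb]; ring
      have hfin : a₀ * n + (n - 2) * m - ((a₀ + 1) * ((n - 2) + 1) - 1 - r) ≤ d := by
        rw [hdval]; linarith
      linarith [p8]
  · -- a = m - 1
    have ha : a = m - 1 := by omega
    set b₀ := r / (m - 1) with hb₀def
    have hm1 : (0 : ℤ) < m - 1 := by linarith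
    have hmod1 : 0 ≤ r % (m - 1) := Int.emod_nonneg r (by linarith)
    have hmod2 : r % (m - 1) < m - 1 := Int.emod_lt_of_pos r hm1
    have hdm : (m - 1) * b₀ + r % (m - 1) = r := Int.mul_ediv_add_emod r (m - 1)
    have h1 : (m - 1) * b₀ ≤ r := by linarith
    have h2 : r < (m - 1) * (b₀ + 1) := by nlinarith
    have hb₀0 : 0 ≤ b₀ := Int.ediv_nonneg hr0.le (by linarith)
    have hb₀1 : b₀ ≤ n - 2 := by nlinarith
    obtain ⟨a', b', h', p1, p2, p3, p4, p5, p6, p7, p8⟩ :=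
      key_descent m n r hm hn hr0 ((m - 2).toNat + b₀.toNat) (m - 2) b₀ le_rfl
        (by linarith) le_rfl hb₀0 hb₀1 (by nlinarith)
    refine ⟨a' * n + b' * m - h', ⟨a', b', h', p1, p2, p3, p4, p5, p6, p7, rfl⟩, ?_⟩
    have hdiff : a * n + b * m - ((a + 1) * (b + 1) - 1 - r) -
        ((m - 2) * n + b₀ * m - (((m - 2) + 1) * (b₀ + 1) - 1 - r)) = n - 1 - b₀ := by
      rw [ha]; ring
    have hfin : (m - 2) * n + b₀ * m - (((m - 2) + 1) * (b₀ + 1) - 1 - r) ≤ d := by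
      rw [hdval]; linarith
    linarith [p8]

/-- The minimum defining `δ_r(m,n)` is already attained on the smaller set
`I'_r` of triples with `0 ≤ a ≤ m-2`, `0 ≤ b ≤ n-2` and `0 ≤ h ≤ min a b`. -/
theorem delta_eq_min_over_restricted_set (m n r : ℤ) (hm : 2 ≤ m) (hn : 2 ≤ n)
    (hr0 : 0 < r) (hr1 : r < (m - 1) * (n - 1)) :
    delta m n r =
      sInf {d : ℤ | ∃ a b h : ℤ, 0 ≤ a ∧ a ≤ m - 2 ∧ 0 ≤ b ∧ b ≤ n - 2 ∧
        0 ≤ h ∧ h ≤ min a b ∧ r = (a + 1) * (b + 1) - 1 - h ∧ d = a * n + b * m - h} := by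
  set S := {d : ℤ | ∃ a b h : ℤ, 0 ≤ a ∧ a ≤ m - 1 ∧ 0 ≤ b ∧ b ≤ n - 1 ∧ 0 ≤ h ∧
    r = (a + 1) * (b + 1) - 1 - h ∧ d = a * n + b * m - h} with hSdef
  set S' := {d : ℤ | ∃ a b h : ℤ, 0 ≤ a ∧ a ≤ m - 2 ∧ 0 ≤ b ∧ b ≤ n - 2 ∧
    0 ≤ h ∧ h ≤ min a b ∧ r = (a + 1) * (b + 1) - 1 - h ∧ d = a * n + b * m - h}
    with hS'def
  have hsub : S' ⊆ S := by
    rintro d ⟨a, b, h, p1, p2, p3, p4, p5, _, p7, p8⟩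
    exact ⟨a, b, h, p1, by linarith, p3, by linarith, p5, p7, p8⟩
  have hSne : S.Nonempty := by
    refine ⟨(m - 2) * n + (n - 2) * m - ((m - 1) * (n - 1) - 1 - r),
      m - 2, n - 2, (m - 1) * (n - 1) - 1 - r, by linarith, by linarith, by linarith,
      by linarith, by linarith, by ring, by ring_nf⟩
  have hred := reduce m n r hm hn hr0 hr1
  have hS'ne : S'.Nonempty := by
    obtain ⟨d, hd⟩ := hSne
    obtain ⟨d', hd', _⟩ := hred d hd
    exact ⟨d', hd'⟩
  have hbdd : BddBelow S := by
    refine ⟨-(m * n), ?_⟩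
    rintro d ⟨a, b, h, p1, p2, p3, p4, p5, p7, p8⟩
    have h1 : 0 ≤ a * n := mul_nonneg p1 (by linarith)
    have h2 : 0 ≤ b * m := mul_nonneg p3 (by linarith)
    have h3 : (a + 1) * (b + 1) ≤ m * n :=
      mul_le_mul (by linarith) (by linarith) (by linarith) (by linarith)
    rw [p8]; nlinarith
  unfold delta
  rw [← hSdef]
  apply le_antisymm
  · exact csInf_le_csInf hbdd hS'ne hsub
  · refine le_csInf hSne ?_
    intro d hd
    obtain ⟨d', hd', hle⟩ := hred d hd
    exact le_trans (csInf_le (hbdd.mono hsub) hd') hle
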